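/- arXiv:1712.00850 — 10 statements merged into one kernel-verified Lean document; each statement's English description precedes it below -/
import Mathlib

section
/- Let C be a triangulated category closed under coproducts of fewer than α objects (for a regular cardinal α). Then the coproduct of any family of distinguished triangles of cardinality less than α is a distinguished triangle. -/
open CategoryTheory CategoryTheory.Limits CategoryTheory.Pretriangulated CategoryTheory.Category

universe v u

variable (C : Type u) [Category.{v} C] [HasZeroObject C] [Preadditive C] [HasShift C ℤ]
  [∀ n : ℤ, (shiftFunctor C n).Additive] [Pretriangulated C]

section Aux

variable {C}
variable {I : Type v} [HasCoproductsOfShape I C] (T : I → Triangle C)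
  (hT : ∀ i, T i ∈ distTriang C)

/-- The coproduct of a family of triangles. -/
@[simps!]
noncomputable abbrev coprodTriangle : Triangle C :=
  ⟨_, _, _, (Limits.Sigma.map fun i => (T i).mor₁), (Limits.Sigma.map fun i => (T i).mor₂),
    (Sigma.desc fun i => (T i).mor₃ ≫
      (shiftFunctor C (1 : ℤ)).map (Sigma.ι (fun j => (T j).obj₁) i))⟩

/-- The inclusion of a summand into the coproduct triangle. -/
@[simps]
noncomputable def coprodTriangleι (j : I) : T j ⟶ coprodTriangle T where
  hom₁ := Sigma.ι (fun i => (T i).obj₁) j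
  hom₂ := Sigma.ι (fun i => (T i).obj₂) j
  hom₃ := Sigma.ι (fun i => (T i).obj₃) j
  comm₁ := by dsimp [coprodTriangle]; simp
  comm₂ := by dsimp [coprodTriangle]; simp
  comm₃ := by dsimp [coprodTriangle]; simp

/-- Descent of a family of morphisms of triangles from the coproduct triangle. -/
@[simps]
noncomputable def coprodTriangleDesc {T' : Triangle C} (φ : ∀ j, T j ⟶ T') :
    coprodTriangle T ⟶ T' where
  hom₁ := Sigma.desc fun j => (φ j).hom₁
  hom₂ := Sigma.desc fun j => (φ j).hom₂
  hom₃ := Sigma.desc fun j => (φ j).hom₃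
  comm₁ := by dsimp [coprodTriangle]; ext j; simp [(φ j).comm₁]
  comm₂ := by dsimp [coprodTriangle]; ext j; simp [(φ j).comm₂]
  comm₃ := by
    dsimp [coprodTriangle]
    ext j
    simp only [coprodTriangle, Triangle.mk_obj₁, Triangle.mk_mor₃, colimit.ι_desc_assoc,
      Discrete.functor_obj_eq_as, Cofan.mk_pt, Cofan.mk_ι_app, assoc, colimit.ι_desc]
    rw [← Functor.map_comp, colimit.ι_desc]
    exact (φ j).comm₃

include hT in
lemma coprodTriangle_distinguished : coprodTriangle T ∈ distTriang C := by
  let f₁ := Limits.Sigma.map fun i => (T i).mor₁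
  obtain ⟨Z, f₂, f₃, hT'⟩ := distinguished_cocone_triangle f₁
  let T' : Triangle C := ⟨_, _, _, f₁, f₂, f₃⟩
  change T' ∈ distTriang C at hT'
  let φ : ∀ j, T j ⟶ T' := fun j => completeDistinguishedTriangleMorphism _ _
    (hT j) hT' (Sigma.ι (fun i => (T i).obj₁) j) (Sigma.ι (fun i => (T i).obj₂) j) (by simp [f₁, T'])
  let φ' := coprodTriangleDesc T φ
  have h₁ : φ'.hom₁ = 𝟙 _ := by
    apply Sigma.hom_ext
    intro j
    simp [φ', φ, coprodTriangle]
  have h₂ : φ'.hom₂ = 𝟙 _ := by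
    apply Sigma.hom_ext
    intro j
    simp [φ', φ, coprodTriangle]
  have : IsIso φ'.hom₁ := by rw [h₁]; infer_instance
  have : IsIso φ'.hom₂ := by rw [h₂]; infer_instance
  -- the shift of the coproduct of the `obj₁` is a coproduct
  have hc₁ : IsColimit (Cofan.mk ((∐ fun j => (T j).obj₁)⟦(1 : ℤ)⟧)
      (fun j => ((Sigma.ι (fun i => (T i).obj₁) j)⟦(1 : ℤ)⟧'))) :=
    isColimitCofanMkObjOfIsColimit (shiftFunctor C (1 : ℤ)) _ _
      (coproductIsCoproduct (fun j => (T j).obj₁))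
  have hc₂ : IsColimit (Cofan.mk ((∐ fun j => (T j).obj₂)⟦(1 : ℤ)⟧)
      (fun j => ((Sigma.ι (fun i => (T i).obj₂) j)⟦(1 : ℤ)⟧'))) :=
    isColimitCofanMkObjOfIsColimit (shiftFunctor C (1 : ℤ)) _ _
      (coproductIsCoproduct (fun j => (T j).obj₂))
  have key : ∀ {A : C} (g : (∐ fun j => (T j).obj₁)⟦(1 : ℤ)⟧ ⟶ A),
      (∀ j, ∃ (b : (T j).obj₂⟦(1 : ℤ)⟧ ⟶ A),
        (Sigma.ι (fun i => (T i).obj₁) j)⟦(1 : ℤ)⟧' ≫ g = (T j).mor₁⟦(1 : ℤ)⟧' ≫ b) →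
      T'.mor₃ ≫ g = 0 := by
    intro A g hg
    choose b hb using hg
    let h : (∐ fun j => (T j).obj₂)⟦(1 : ℤ)⟧ ⟶ A := hc₂.desc (Cofan.mk A b)
    have hh : ∀ j, (Sigma.ι (fun i => (T i).obj₂) j)⟦(1 : ℤ)⟧' ≫ h = b j := fun j =>
      hc₂.fac (Cofan.mk A b) ⟨j⟩
    have hgh : g = f₁⟦(1 : ℤ)⟧' ≫ h := by
      refine Cofan.IsColimit.hom_ext hc₁ _ _ (fun j => ?_)
      dsimp
      rw [hb j, ← Functor.map_comp_assoc]
      have : Sigma.ι (fun i => (T i).obj₁) j ≫ f₁ =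
          (T j).mor₁ ≫ Sigma.ι (fun i => (T i).obj₂) j := by simp [f₁]
      rw [this, Functor.map_comp, assoc, hh]
    rw [hgh, ← assoc]
    have : T'.mor₃ ≫ T'.mor₁⟦(1 : ℤ)⟧' = 0 := comp_distTriang_mor_zero₃₁ _ hT'
    rw [show T'.mor₃ ≫ f₁⟦(1 : ℤ)⟧' = 0 from this, zero_comp]
  suffices IsIso φ'.hom₃ by
    have : IsIso φ' := by
      apply Triangle.isIso_of_isIsos
      all_goals infer_instance
    exact isomorphic_distinguished _ hT' _ (asIso φ')
  refine isIso_of_coyoneda_map_bijective _ (fun A => ⟨?_, ?_⟩)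
  · -- injectivity: suffices φ'.hom₃ is an epimorphism
    suffices Epi φ'.hom₃ by
      intro a₁ a₂ ha
      simpa only [← cancel_epi φ'.hom₃] using ha
    constructor
    intro A u v huv
    suffices h0 : ∀ (f : Z ⟶ A), φ'.hom₃ ≫ f = 0 → f = 0 by
      have := h0 (u - v) (by rw [Preadditive.comp_sub, huv, sub_self])
      rw [← sub_eq_zero]; exact this
    intro f hf
    have hf' : T'.mor₂ ≫ f = 0 := by
      have := φ'.comm₂
      rw [h₂, id_comp] at this
      rw [← this, assoc, hf, comp_zero]
    obtain ⟨g, hg⟩ := T'.yoneda_exact₃ hT' f hf'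
    have hg' : ∀ j, (T j).mor₃ ≫ ((Sigma.ι (fun i => (T i).obj₁) j)⟦(1 : ℤ)⟧' ≫ g) = 0 := by
      intro j
      have h3 : (T j).mor₃ ≫ (Sigma.ι (fun i => (T i).obj₁) j)⟦(1 : ℤ)⟧' =
          (φ j).hom₃ ≫ T'.mor₃ := (φ j).comm₃
      have h4 : (φ j).hom₃ ≫ f = 0 := by
        have : (φ j).hom₃ = Sigma.ι (fun i => (T i).obj₃) j ≫ φ'.hom₃ := by
          simp [φ', coprodTriangle]
        rw [this, assoc, hf, comp_zero]
      rw [hg, ← assoc, ← h3, assoc] at h4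
      exact h4
    have hg'' : ∀ j, ∃ (b : (T j).obj₂⟦(1 : ℤ)⟧ ⟶ A),
        (Sigma.ι (fun i => (T i).obj₁) j)⟦(1 : ℤ)⟧' ≫ g = (T j).mor₁⟦(1 : ℤ)⟧' ≫ b := by
      intro j
      obtain ⟨b, hb⟩ := Triangle.yoneda_exact₃ _ (rot_of_distTriang _ (hT j)) _ (hg' j)
      exact ⟨-b, by rw [hb]; exact (Preadditive.neg_comp _ _).trans (Preadditive.comp_neg _ _).symm⟩
    rw [hg, key g hg'']
  · -- surjectivity
    intro a
    obtain ⟨a', ha'⟩ : ∃ (a' : Z ⟶ A), (coprodTriangle T).mor₂ ≫ a = T'.mor₂ ≫ a' := by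
      have h0 : T'.mor₁ ≫ ((coprodTriangle T).mor₂ ≫ a) = 0 := by
        rw [← assoc]
        have hz : T'.mor₁ ≫ (coprodTriangle T).mor₂ = 0 := by
          apply Sigma.hom_ext
          intro j
          simp [T', f₁, coprodTriangle, comp_distTriang_mor_zero₁₂_assoc _ (hT j)]
        rw [hz, zero_comp]
      obtain ⟨a', ha'⟩ := T'.yoneda_exact₂ hT' _ h0
      exact ⟨a', ha'⟩
    have hd : ∀ j, (T j).mor₂ ≫ (Sigma.ι (fun i => (T i).obj₃) j ≫ (a - φ'.hom₃ ≫ a')) = 0 := by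
      intro j
      have e1 : (T j).mor₂ ≫ Sigma.ι (fun i => (T i).obj₃) j =
          Sigma.ι (fun i => (T i).obj₂) j ≫ (coprodTriangle T).mor₂ := by
        simp [coprodTriangle]
      have e2 : Sigma.ι (fun i => (T i).obj₃) j ≫ φ'.hom₃ = (φ j).hom₃ := by
        simp [φ', coprodTriangle]
      have e3 : (φ j).hom₂ = Sigma.ι (fun i => (T i).obj₂) j := rfl
      have k1 : (T j).mor₂ ≫ Sigma.ι (fun i => (T i).obj₃) j ≫ a =
          Sigma.ι (fun i => (T i).obj₂) j ≫ T'.mor₂ ≫ a' := by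
        rw [← assoc, e1, assoc, ha']
      have k2 : (T j).mor₂ ≫ Sigma.ι (fun i => (T i).obj₃) j ≫ φ'.hom₃ ≫ a' =
          Sigma.ι (fun i => (T i).obj₂) j ≫ T'.mor₂ ≫ a' := by
        rw [← assoc, ← assoc, assoc ((T j).mor₂), e2, ← assoc, (φ j).comm₂, e3, assoc]
      rw [Preadditive.comp_sub, Preadditive.comp_sub, k1, k2, sub_self]
    have hb : ∀ j, ∃ (b : (T j).obj₁⟦(1 : ℤ)⟧ ⟶ A),
        Sigma.ι (fun i => (T i).obj₃) j ≫ (a - φ'.hom₃ ≫ a') = (T j).mor₃ ≫ b := fun j =>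
      (T j).yoneda_exact₃ (hT j) _ (hd j)
    choose b hbspec using hb
    have hc₁' : IsColimit (Cofan.mk ((∐ fun j => (T j).obj₁)⟦(1 : ℤ)⟧)
        (fun j => ((Sigma.ι (fun i => (T i).obj₁) j)⟦(1 : ℤ)⟧'))) :=
      isColimitCofanMkObjOfIsColimit (shiftFunctor C (1 : ℤ)) _ _
        (coproductIsCoproduct (fun j => (T j).obj₁))
    let b' : (∐ fun j => (T j).obj₁)⟦(1 : ℤ)⟧ ⟶ A := hc₁'.desc (Cofan.mk A b)
    have hb' : ∀ j, (Sigma.ι (fun i => (T i).obj₁) j)⟦(1 : ℤ)⟧' ≫ b' = b j := fun j =>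
      hc₁'.fac (Cofan.mk A b) ⟨j⟩
    have hsub : a - φ'.hom₃ ≫ a' = (coprodTriangle T).mor₃ ≫ b' := by
      apply Sigma.hom_ext
      intro j
      have hι₃ : Sigma.ι (fun i => (T i).obj₃) j ≫ (coprodTriangle T).mor₃ =
          (T j).mor₃ ≫ (Sigma.ι (fun i => (T i).obj₁) j)⟦(1 : ℤ)⟧' := by
        simp [coprodTriangle]
      rw [← assoc, hι₃, assoc, hb', hbspec]
    have hmor₃ : (coprodTriangle T).mor₃ = φ'.hom₃ ≫ T'.mor₃ := by
      have h3 := φ'.comm₃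
      rw [h₁, CategoryTheory.Functor.map_id, comp_id] at h3
      exact h3
    refine ⟨a' + (T'.mor₃ ≫ b' : Z ⟶ A), ?_⟩
    have hfin : φ'.hom₃ ≫ (a' + (T'.mor₃ ≫ b' : Z ⟶ A)) =
        φ'.hom₃ ≫ a' + (coprodTriangle T).mor₃ ≫ b' := by
      rw [Preadditive.comp_add, hmor₃, assoc]
    show φ'.hom₃ ≫ (a' + (T'.mor₃ ≫ b' : Z ⟶ A)) = a
    rw [hfin, ← hsub]
    abel

end Aux

/-- The coproduct of fewer than `α` distinguished triangles is distinguished, in a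
triangulated category closed under coproducts of fewer than `α` objects. -/
theorem coproduct_of_distinguished (α : Cardinal.{v}) (hα : α.IsRegular)
    (hC : ∀ I : Type v, Cardinal.mk I < α → HasCoproductsOfShape I C)
    (I : Type v) (hI : Cardinal.mk I < α) [HasCoproductsOfShape I C]
    (T : I → Triangle C) (hT : ∀ i, T i ∈ distTriang C) :
    Triangle.mk (Limits.Sigma.map fun i => (T i).mor₁) (Limits.Sigma.map fun i => (T i).mor₂)
      (Sigma.desc fun i => (T i).mor₃ ≫
        (shiftFunctor C (1 : ℤ)).map (Sigma.ι (fun j => (T j).obj₁) i)) ∈ distTriang C := by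
  exact coprodTriangle_distinguished T hT
end

section
/- Let C be a triangulated category closed under countable coproducts, and P ⊆ Ob C any class of objects. Then the smallest extension-closed class containing ∪_{i≥0} P[i] and closed under countable coproducts is Karoubian and Karoubi-closed in C; similarly for ∪_{i≤0} P[i]. -/
open CategoryTheory CategoryTheory.Limits CategoryTheory.Pretriangulated ZeroObject

universe v u

variable (C : Type u) [Category.{v} C] [HasZeroObject C] [Preadditive C] [HasShift C ℤ]
  [∀ n : ℤ, (shiftFunctor C n).Additive] [Pretriangulated C]

/-- A class of objects is extension-closed if it contains `0`, is closed under isomorphisms,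
and is closed under extensions (middle terms of distinguished triangles). -/
def ExtClosed (S : Set C) : Prop :=
  (0 : C) ∈ S ∧ (∀ ⦃X Y : C⦄, X ∈ S → Nonempty (X ≅ Y) → Y ∈ S) ∧
    ∀ T : Triangle C, (T ∈ distTriang C) → T.obj₁ ∈ S → T.obj₃ ∈ S → T.obj₂ ∈ S

/-- `StarClass C P Q` is the class `P ⋆ Q` of all extensions of elements of `Q` by elements
of `P`, i.e. objects `E` fitting in a distinguished triangle `P₁ → E → Q₁ → P₁[1]` with
`P₁ ∈ P`, `Q₁ ∈ Q`. -/
def StarClass (P Q : Set C) : Set C :=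
  {E | ∃ T : Triangle C, (T ∈ distTriang C) ∧ T.obj₁ ∈ P ∧ T.obj₃ ∈ Q ∧ Nonempty (T.obj₂ ≅ E)}

/-- A class of objects is closed under coproducts of fewer than `α` of its elements. -/
def SmashClosed (α : Cardinal.{v}) (S : Set C) : Prop :=
  ∀ (I : Type v), Cardinal.mk I < α → ∀ (f : I → C) [HasCoproduct f],
    (∀ i, f i ∈ S) → (∐ f) ∈ S

/-- The smallest strict extension-closed class containing `B` and closed under countable
coproducts. -/
def CountClosure (B : Set C) : Set C :=
  ⋂₀ {S : Set C | B ⊆ S ∧ ExtClosed C S ∧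
    ∀ (I : Type v) [Countable I] (f : I → C) [HasCoproduct f], (∀ i, f i ∈ S) → (∐ f) ∈ S}

section Aux

variable {C}

lemma subset_countClosure (B : Set C) : B ⊆ CountClosure C B :=
  fun _ hb => Set.mem_sInter.2 fun _ hS => hS.1 hb

lemma zero_mem_countClosure (B : Set C) : (0 : C) ∈ CountClosure C B :=
  Set.mem_sInter.2 fun _ hS => hS.2.1.1

lemma countClosure_iso {B : Set C} {X Y : C} (h : X ∈ CountClosure C B)
    (e : Nonempty (X ≅ Y)) : Y ∈ CountClosure C B :=
  Set.mem_sInter.2 fun S hS => hS.2.1.2.1 (Set.mem_sInter.1 h S hS) e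

lemma countClosure_ext {B : Set C} (T : Triangle C) (hT : T ∈ distTriang C)
    (h1 : T.obj₁ ∈ CountClosure C B) (h3 : T.obj₃ ∈ CountClosure C B) :
    T.obj₂ ∈ CountClosure C B :=
  Set.mem_sInter.2 fun S hS =>
    hS.2.1.2.2 T hT (Set.mem_sInter.1 h1 S hS) (Set.mem_sInter.1 h3 S hS)

lemma countClosure_coprod {B : Set C} (I : Type v) [Countable I] (f : I → C)
    [HasCoproduct f] (hf : ∀ i, f i ∈ CountClosure C B) : (∐ f) ∈ CountClosure C B :=
  Set.mem_sInter.2 fun S hS => hS.2.2 I f (fun i => Set.mem_sInter.1 (hf i) S hS)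

/-- Closure of `CountClosure` under a shift `⟦n⟧`, provided `B` is closed under `⟦n⟧`
and shifted distinguished triangles witness extensions. -/
lemma countClosure_shift (hC : ∀ (I : Type v) [Countable I], HasCoproductsOfShape I C)
    (B : Set C) (n : ℤ) (hB : ∀ b ∈ B, b⟦n⟧ ∈ B)
    (hext : ∀ (T : Triangle C), (T ∈ distTriang C) →
      T.obj₁⟦n⟧ ∈ CountClosure C B → T.obj₃⟦n⟧ ∈ CountClosure C B →
      T.obj₂⟦n⟧ ∈ CountClosure C B)
    {M : C} (hM : M ∈ CountClosure C B) : M⟦n⟧ ∈ CountClosure C B := by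
  have key : M ∈ {M : C | M ∈ CountClosure C B ∧ M⟦n⟧ ∈ CountClosure C B} := by
    refine Set.mem_sInter.1 hM _ ⟨fun b hb => ⟨subset_countClosure B hb,
      subset_countClosure B (hB b hb)⟩,
      ⟨⟨zero_mem_countClosure B, countClosure_iso (zero_mem_countClosure B)
        ⟨((shiftFunctor C n).mapZeroObject).symm⟩⟩, ?_, ?_⟩, ?_⟩
    · rintro X Y ⟨hX1, hX2⟩ ⟨e⟩
      exact ⟨countClosure_iso hX1 ⟨e⟩, countClosure_iso hX2 ⟨(shiftFunctor C n).mapIso e⟩⟩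
    · intro T hT h1 h3
      exact ⟨countClosure_ext T hT h1.1 h3.1, hext T hT h1.2 h3.2⟩
    · intro I _ f _ hf
      haveI := hC I
      refine ⟨countClosure_coprod I f (fun i => (hf i).1), ?_⟩
      have h1 : (∐ fun i => (f i)⟦n⟧) ∈ CountClosure C B :=
        countClosure_coprod I _ (fun i => (hf i).2)
      exact countClosure_iso h1 ⟨asIso (sigmaComparison (shiftFunctor C n) f)⟩
  exact key.2

/-- A coproduct of binary coproducts is the binary coproduct of the coproducts. -/
noncomputable def flattenIso (I : Type v) (f₁ f₂ : I → C) [HasBinaryCoproducts C]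
    [HasCoproduct f₁] [HasCoproduct f₂] [HasCoproduct fun i => f₁ i ⨿ f₂ i] :
    (∐ fun i => f₁ i ⨿ f₂ i) ≅ (∐ f₁) ⨿ (∐ f₂) where
  hom := Sigma.desc fun i => coprod.map (Sigma.ι f₁ i) (Sigma.ι f₂ i)
  inv := coprod.desc (Sigma.desc fun i => coprod.inl ≫ Sigma.ι (fun i => f₁ i ⨿ f₂ i) i)
    (Sigma.desc fun i => coprod.inr ≫ Sigma.ι (fun i => f₁ i ⨿ f₂ i) i)
  hom_inv_id := by
    ext i <;> simp
    · erw [coprod.inl_desc]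
    · erw [coprod.inr_desc]
  inv_hom_id := by
    ext i <;> simp
    · erw [coprod.inl_desc]; simp
    · erw [coprod.inr_desc]; simp

/-- A coproduct over a sum type is the binary coproduct of the two coproducts. -/
noncomputable def binSumIso {I₁ I₂ : Type v} (f₁ : I₁ → C) (f₂ : I₂ → C)
    [HasCoproduct f₁] [HasCoproduct f₂] [HasCoproduct (Sum.elim f₁ f₂)]
    [HasBinaryCoproduct (∐ f₁) (∐ f₂)] :
    (∐ Sum.elim f₁ f₂) ≅ (∐ f₁) ⨿ (∐ f₂) :=
  (colimit.isColimit _).coconePointUniqueUpToIso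
    (Cofan.combPairIsColimit (coproductIsCoproduct f₁) (coproductIsCoproduct f₂)
      (coprodIsCoprod (∐ f₁) (∐ f₂)))

/-- The equivalence `PUnit ⊕ ℕ ≃ ℕ`. -/
def punitSumNatEquiv : Sum PUnit.{v + 1} (ULift.{v} ℕ) ≃ ULift.{v} ℕ where
  toFun := Sum.elim (fun _ => ⟨0⟩) (fun n => ⟨n.down + 1⟩)
  invFun := fun n => match n with
    | ⟨0⟩ => .inl ⟨⟩
    | ⟨m + 1⟩ => .inr ⟨m⟩
  left_inv := by rintro (⟨⟩ | ⟨n⟩) <;> rfl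
  right_inv := by rintro ⟨_ | n⟩ <;> rfl

/-- The basic Eilenberg swindle `X ⨿ X^{(ℕ)} ≅ X^{(ℕ)}`. -/
noncomputable def constSwindleIso (hC : ∀ (I : Type v) [Countable I], HasCoproductsOfShape I C)
    [HasBinaryCoproducts C] (X : C) :
    haveI := hC (ULift.{v} ℕ)
    X ⨿ (∐ fun _ : ULift.{v} ℕ => X) ≅ ∐ fun _ : ULift.{v} ℕ => X := by
  haveI := hC (ULift.{v} ℕ)
  haveI := hC (Sum PUnit.{v + 1} (ULift.{v} ℕ))
  refine coprod.mapIso (coproductUniqueIso (fun _ : PUnit.{v + 1} => X)).symm (Iso.refl _) ≪≫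
    (binSumIso (fun _ : PUnit.{v + 1} => X) (fun _ : ULift.{v} ℕ => X)).symm ≪≫
    Sigma.whiskerEquiv punitSumNatEquiv (fun j => ?_)
  rcases j with _ | _ <;> exact Iso.refl X

/-- The Eilenberg swindle: if `Z ≅ X ⊞ Y` then `X ⨿ Z^{(ℕ)} ≅ Z^{(ℕ)}`. -/
noncomputable def swindleIso (hC : ∀ (I : Type v) [Countable I], HasCoproductsOfShape I C)
    [HasBinaryCoproducts C] (X Y Z : C) (e : Z ≅ X ⨿ Y) :
    haveI := hC (ULift.{v} ℕ)
    X ⨿ (∐ fun _ : ULift.{v} ℕ => Z) ≅ ∐ fun _ : ULift.{v} ℕ => Z := by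
  haveI := hC (ULift.{v} ℕ)
  have ψ : (∐ fun _ : ULift.{v} ℕ => Z) ≅
      (∐ fun _ : ULift.{v} ℕ => X) ⨿ (∐ fun _ : ULift.{v} ℕ => Y) :=
    Sigma.mapIso (fun _ => e) ≪≫
      flattenIso (ULift.{v} ℕ) (fun _ => X) (fun _ => Y)
  exact coprod.mapIso (Iso.refl X) ψ ≪≫ (coprod.associator _ _ _).symm ≪≫
    coprod.mapIso (constSwindleIso hC X) (Iso.refl _) ≪≫ ψ.symm

/-- Karoubi-closedness of `CountClosure B`, given that `B` and triangles are suitably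
closed under a shift `⟦n⟧` with `n = 1` or `n = -1`. -/
lemma countClosure_retract (hC : ∀ (I : Type v) [Countable I], HasCoproductsOfShape I C)
    (B : Set C) (n : ℤ) (hn : n = 1 ∨ n = -1) (hB : ∀ b ∈ B, b⟦n⟧ ∈ B)
    (X Z : C) (hZ : Z ∈ CountClosure C B)
    (h : ∃ (s : X ⟶ Z) (r : Z ⟶ X), s ≫ r = 𝟙 X) : X ∈ CountClosure C B := by
  obtain ⟨s, r, hsr⟩ := h
  obtain ⟨Y, g, h, mem⟩ := distinguished_cocone_triangle s
  have h0 : h = 0 := by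
    have hc := comp_distTriang_mor_zero₃₁ _ mem
    calc h = h ≫ (𝟙 X)⟦(1 : ℤ)⟧' := by simp
    _ = h ≫ (s ≫ r)⟦(1 : ℤ)⟧' := by rw [hsr]
    _ = (h ≫ s⟦(1 : ℤ)⟧') ≫ r⟦(1 : ℤ)⟧' := by rw [Functor.map_comp, Category.assoc]
    _ = 0 := by rw [show h ≫ s⟦(1 : ℤ)⟧' = 0 from hc, zero_comp]
  obtain ⟨e, -, -⟩ := exists_iso_binaryBiproduct_of_distTriang _ mem h0
  haveI := hC (ULift.{v} ℕ)
  set K : C := ∐ fun _ : ULift.{v} ℕ => Z with hKdef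
  have hK : K ∈ CountClosure C B := countClosure_coprod _ _ (fun _ => hZ)
  have Φ : X ⨿ K ≅ K := swindleIso hC X Y Z (e ≪≫ biprod.isoCoprod X Y)
  have hXK : (X ⊞ K) ∈ CountClosure C B :=
    countClosure_iso hK ⟨Φ.symm ≪≫ (biprod.isoCoprod X K).symm⟩
  have hext : ∀ (T : Triangle C), (T ∈ distTriang C) →
      T.obj₁⟦n⟧ ∈ CountClosure C B → T.obj₃⟦n⟧ ∈ CountClosure C B →
      T.obj₂⟦n⟧ ∈ CountClosure C B := by
    rcases hn with rfl | rfl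
    · intro T hT h1 h3
      exact countClosure_ext _
        (rot_of_distTriang _ (rot_of_distTriang _ (rot_of_distTriang _ hT))) h1 h3
    · intro T hT h1 h3
      exact countClosure_ext _
        (inv_rot_of_distTriang _ (inv_rot_of_distTriang _ (inv_rot_of_distTriang _ hT))) h1 h3
  rcases hn with rfl | rfl
  · have hKX : (K ⊞ X) ∈ CountClosure C B :=
      countClosure_iso hXK ⟨biprod.braiding X K⟩
    have hK1 : K⟦(1 : ℤ)⟧ ∈ CountClosure C B :=
      countClosure_shift hC B 1 hB hext hK
    exact countClosure_ext _
      (rot_of_distTriang _ (binaryBiproductTriangle_distinguished K X)) hKX hK1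
  · have hK1 : K⟦(-1 : ℤ)⟧ ∈ CountClosure C B :=
      countClosure_shift hC B (-1) hB hext hK
    exact countClosure_ext _
      (inv_rot_of_distTriang _ (binaryBiproductTriangle_distinguished X K)) hK1 hXK

end Aux

/-- Corollary `corokar`(2): for `C` closed under countable coproducts and any class `P`, the
classes `[∪_{i≥0} P[i]]` and `[∪_{i≤0} P[i]]` (smallest strict extension-closed classes closed
under countable coproducts) are Karoubian and Karoubi-closed in `C`. -/
theorem countClosure_karoubiClosed
    (hC : ∀ (I : Type v) [Countable I], HasCoproductsOfShape I C) (P : Set C) :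
    (∀ X Z : C, Z ∈ CountClosure C {W | ∃ X₀ ∈ P, ∃ i : ℕ, Nonempty (W ≅ X₀⟦(i : ℤ)⟧)} →
      (∃ (s : X ⟶ Z) (r : Z ⟶ X), s ≫ r = 𝟙 X) →
      X ∈ CountClosure C {W | ∃ X₀ ∈ P, ∃ i : ℕ, Nonempty (W ≅ X₀⟦(i : ℤ)⟧)}) ∧
    (∀ X Z : C, Z ∈ CountClosure C {W | ∃ X₀ ∈ P, ∃ i : ℕ, Nonempty (W ≅ X₀⟦(-(i : ℤ))⟧)} →
      (∃ (s : X ⟶ Z) (r : Z ⟶ X), s ≫ r = 𝟙 X) →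
      X ∈ CountClosure C {W | ∃ X₀ ∈ P, ∃ i : ℕ, Nonempty (W ≅ X₀⟦(-(i : ℤ))⟧)}) := by
  constructor
  · intro X Z hZ h
    refine countClosure_retract hC _ 1 (Or.inl rfl) ?_ X Z hZ h
    rintro b ⟨X₀, hX₀, i, ⟨hb⟩⟩
    refine ⟨X₀, hX₀, i + 1, ⟨(shiftFunctor C (1 : ℤ)).mapIso hb ≪≫
      ((shiftFunctorAdd' C (i : ℤ) 1 ((i + 1 : ℕ) : ℤ) (by push_cast; ring)).symm.app X₀)⟩⟩
  · intro X Z hZ h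
    refine countClosure_retract hC _ (-1) (Or.inr rfl) ?_ X Z hZ h
    rintro b ⟨X₀, hX₀, i, ⟨hb⟩⟩
    refine ⟨X₀, hX₀, i + 1, ⟨(shiftFunctor C (-1 : ℤ)).mapIso hb ≪≫
      ((shiftFunctorAdd' C (-(i : ℤ)) (-1) (-((i + 1 : ℕ) : ℤ)) (by push_cast; ring)).symm.app
        X₀)⟩⟩
end

section
/- Any triangulated category closed under countable coproducts is Karoubian (idempotent complete). -/
open CategoryTheory CategoryTheory.Limits CategoryTheory.Pretriangulated ZeroObject

universe v u

variable (C : Type u) [Category.{v} C] [HasZeroObject C] [Preadditive C] [HasShift C ℤ]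
  [∀ n : ℤ, (shiftFunctor C n).Additive] [Pretriangulated C]

/-- Any triangulated category closed under countable coproducts is Karoubian
(idempotent complete). -/
theorem idempotentComplete_of_countable_coproducts
    (hC : ∀ (I : Type v) [Countable I], HasCoproductsOfShape I C) :
    IsIdempotentComplete C := by
  have hNat : HasCoproductsOfShape ℕ C := by
    have := hC (ULift.{v} ℕ)
    exact hasColimitsOfShape_of_equivalence
      (Discrete.equivalence (Equiv.ulift : ULift.{v} ℕ ≃ ℕ))
  constructor
  intro X e he
  -- the countable coproduct of copies of X
  let A : C := ∐ (fun (_ : ℕ) => X)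
  let ι : ∀ _ : ℕ, X ⟶ A := fun n => Sigma.ι (fun (_ : ℕ) => X) n
  -- the "shift by e" endomorphism
  let s : A ⟶ A := Sigma.desc (fun n => e ≫ ι (n + 1))
  have hs : ∀ n, ι n ≫ s = e ≫ ι (n + 1) := fun n => Sigma.ι_desc _ _
  -- the telescope map
  let u : A ⟶ A := 𝟙 A - s
  have hu : ∀ n, ι n ≫ u = ι n - e ≫ ι (n + 1) := by
    intro n
    simp [u, Preadditive.comp_sub, hs]
  -- `u` is a split monomorphism, with explicit retraction `r`
  let r : A ⟶ A := Sigma.desc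
    (fun n => (𝟙 X - e) ≫ ι n - ∑ k ∈ Finset.range n, e ≫ ι k)
  have hr : ∀ n, ι n ≫ r = (𝟙 X - e) ≫ ι n - ∑ k ∈ Finset.range n, e ≫ ι k :=
    fun n => Sigma.ι_desc _ _
  have hur : u ≫ r = 𝟙 A := by
    apply Sigma.hom_ext
    intro n
    have step : ι n ≫ u ≫ r = (ι n - e ≫ ι (n + 1)) ≫ r := by
      rw [← Category.assoc, hu]
    rw [step, Preadditive.sub_comp, Category.assoc, hr, hr (n + 1),
      Finset.sum_range_succ, Category.comp_id]
    simp only [Preadditive.comp_add, Preadditive.add_comp, Preadditive.comp_sub,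
      Preadditive.sub_comp, Preadditive.comp_sum, Category.id_comp, Category.comp_id,
      ← Category.assoc, he]
    simp only [ι]
    abel
  -- distinguished triangle on u
  obtain ⟨Y, p, δ, hT⟩ := Pretriangulated.distinguished_cocone_triangle u
  set T : Triangle C := Triangle.mk u p δ with hTdef
  -- the connecting map δ vanishes since u is a split mono
  have hδ : δ = 0 := by
    have h31 : T.mor₃ ≫ T.mor₁⟦(1 : ℤ)⟧' = 0 := comp_distTriang_mor_zero₃₁ T hT
    have : δ ≫ u⟦(1 : ℤ)⟧' ≫ r⟦(1 : ℤ)⟧' = 0 := by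
      rw [← Category.assoc]
      rw [show δ ≫ u⟦(1 : ℤ)⟧' = 0 from h31, zero_comp]
    rw [← Functor.map_comp, hur] at this
    simpa using this
  -- the map A → X given by e on every component
  let σ : A ⟶ X := Sigma.desc (fun _ => e)
  have hσι : ∀ n, ι n ≫ σ = e := fun n => Sigma.ι_desc _ _
  have huσ : u ≫ σ = 0 := by
    apply Sigma.hom_ext
    intro n
    rw [← Category.assoc, comp_zero]
    show (ι n ≫ u) ≫ σ = 0
    rw [hu, Preadditive.sub_comp, Category.assoc, hσι, hσι, he, sub_self]
  -- factor σ through p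
  obtain ⟨g₀, hg₀⟩ := Triangle.yoneda_exact₂ T hT σ huσ
  let g : Y ⟶ X := g₀
  have hg : σ = p ≫ g := hg₀
  -- basic relations for p
  have hup : u ≫ p = 0 := comp_distTriang_mor_zero₁₂ T hT
  have hsp : s ≫ p = p := by
    have : (𝟙 A - s) ≫ p = 0 := hup
    rw [Preadditive.sub_comp, Category.id_comp, sub_eq_zero] at this
    exact this.symm
  have hιp : ∀ n, ι n ≫ p = e ≫ ι (n + 1) ≫ p := by
    intro n
    conv_lhs => rw [← hsp, ← Category.assoc, hs, Category.assoc]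
  have heιp : ∀ n, e ≫ ι n ≫ p = ι n ≫ p := by
    intro n
    rw [hιp n, ← Category.assoc, ← Category.assoc, he, Category.assoc]
  have hιp0 : ∀ n, ι n ≫ p = ι 0 ≫ p := by
    intro n
    induction n with
    | zero => rfl
    | succ k ih => rw [← ih, hιp k, heιp (k + 1)]
  -- the splitting maps
  let q : X ⟶ Y := ι 0 ≫ p
  have hqg : q ≫ g = e := by
    show (ι 0 ≫ p) ≫ g = e
    rw [Category.assoc, ← hg, hσι]
  have hgq : g ≫ q = 𝟙 Y := by
    have hpgq : p ≫ (𝟙 Y - g ≫ q) = 0 := by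
      rw [Preadditive.comp_sub, Category.comp_id, sub_eq_zero]
      rw [← Category.assoc, ← hg]
      apply Sigma.hom_ext
      intro n
      rw [← Category.assoc, hσι]
      show ι n ≫ p = e ≫ ι 0 ≫ p
      rw [heιp 0, hιp0 n]
    obtain ⟨k, hk⟩ := Triangle.yoneda_exact₃ T hT (𝟙 Y - g ≫ q) hpgq
    have : 𝟙 Y - g ≫ q = 0 := by
      have hk' : 𝟙 Y - g ≫ q = δ ≫ k := hk
      rw [hk', hδ]
      exact zero_comp
    rw [sub_eq_zero] at this
    exact this.symm
  exact ⟨Y, g, q, hgq, hqg⟩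
end

section
/- Let w be a weight structure on a triangulated category C. Then C_{w≥0} equals the right orthogonal of C_{w≤-1}, i.e., C_{w≥0} = {N : Hom(M, N) = 0 for all M ∈ C_{w≤0}[-1]}, and dually C_{w≤0} = {M : Hom(M, N) = 0 for all N ∈ C_{w≥0}[1]}. -/
open CategoryTheory CategoryTheory.Limits CategoryTheory.Pretriangulated ZeroObject

universe v u

variable (C : Type u) [Category.{v} C] [HasZeroObject C] [Preadditive C] [HasShift C ℤ]
  [∀ n : ℤ, (shiftFunctor C n).Additive] [Pretriangulated C]

/-- A weight structure on a pretriangulated category `C`, given by the two classes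
`le = C_{w≤0}` and `ge = C_{w≥0}` of objects. -/
structure WeightStructure where
  le : Set C
  ge : Set C
  le_retract : ∀ ⦃X Y : C⦄, Y ∈ le → (∃ (s : X ⟶ Y) (r : Y ⟶ X), s ≫ r = 𝟙 X) → X ∈ le
  ge_retract : ∀ ⦃X Y : C⦄, Y ∈ ge → (∃ (s : X ⟶ Y) (r : Y ⟶ X), s ≫ r = 𝟙 X) → X ∈ ge
  le_shift : ∀ ⦃X : C⦄, X ∈ le → X⟦(-1 : ℤ)⟧ ∈ le
  ge_shift : ∀ ⦃X : C⦄, X ∈ ge → X⟦(1 : ℤ)⟧ ∈ ge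
  orth : ∀ ⦃X Y : C⦄, X ∈ le → Y ∈ ge → ∀ f : X ⟶ Y⟦(1 : ℤ)⟧, f = 0
  wd : ∀ M : C, ∃ (L R : C) (f : L ⟶ M) (g : M ⟶ R⟦(1 : ℤ)⟧) (h : R⟦(1 : ℤ)⟧ ⟶ L⟦(1 : ℤ)⟧),
    L ∈ le ∧ R ∈ ge ∧ Triangle.mk f g h ∈ distTriang C

/-- `C_{w≥0} = (C_{w≤-1})^⊥` and `C_{w≤0} = ^⊥(C_{w≥1})`. -/
theorem weightStructure_orthogonality_characterization (w : WeightStructure C) :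
    (w.ge = {N : C | ∀ ⦃M : C⦄, M⟦(1 : ℤ)⟧ ∈ w.le → ∀ f : M ⟶ N, f = 0}) ∧
    (w.le = {M : C | ∀ ⦃N : C⦄, N⟦(-1 : ℤ)⟧ ∈ w.ge → ∀ f : M ⟶ N, f = 0}) := by
  constructor
  · ext N
    constructor
    · intro hN M hM f
      have h1 : (shiftFunctor C (1 : ℤ)).map f = 0 := w.orth hM hN _
      exact (shiftFunctor C (1 : ℤ)).map_injective (by simpa using h1)
    · intro hN
      obtain ⟨L, R, f, g, h, hL, hR, hT⟩ := w.wd (N⟦(1 : ℤ)⟧)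
      set T := Triangle.mk f g h with hTdef
      have hT3 : T.invRotate.invRotate.invRotate ∈ distTriang C :=
        inv_rot_of_distTriang _ (inv_rot_of_distTriang _ (inv_rot_of_distTriang _ hT))
      set T3 := T.invRotate.invRotate.invRotate with hT3def
      -- T3 : L⟦-1⟧ ⟶ N⟦1⟧⟦-1⟧ ⟶ R⟦1⟧⟦-1⟧
      have eN : (N⟦(1 : ℤ)⟧)⟦(-1 : ℤ)⟧ ≅ N :=
        (shiftFunctorCompIsoId C (1 : ℤ) (-1 : ℤ) (by ring)).app N
      have eL : (L⟦(-1 : ℤ)⟧)⟦(1 : ℤ)⟧ ≅ L :=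
        (shiftFunctorCompIsoId C (-1 : ℤ) (1 : ℤ) (by ring)).app L
      have hL' : (L⟦(-1 : ℤ)⟧)⟦(1 : ℤ)⟧ ∈ w.le :=
        w.le_retract hL ⟨eL.hom, eL.inv, eL.hom_inv_id⟩
      have hmor : T3.mor₁ ≫ eN.hom = 0 := hN hL' _
      obtain ⟨r, hr⟩ := Triangle.yoneda_exact₂ T3 hT3 eN.hom hmor
      have hR' : (R⟦(1 : ℤ)⟧)⟦(-1 : ℤ)⟧ ∈ w.ge := by
        have eR : (R⟦(1 : ℤ)⟧)⟦(-1 : ℤ)⟧ ≅ R :=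
          (shiftFunctorCompIsoId C (1 : ℤ) (-1 : ℤ) (by ring)).app R
        exact w.ge_retract hR ⟨eR.hom, eR.inv, eR.hom_inv_id⟩
      refine w.ge_retract hR' ⟨eN.inv ≫ T3.mor₂, r, ?_⟩
      exact (Category.assoc _ _ _).trans ((congrArg (fun x => eN.inv ≫ x) hr.symm).trans eN.inv_hom_id)
  · ext M
    constructor
    · intro hM N hN f
      have e : (N⟦(-1 : ℤ)⟧)⟦(1 : ℤ)⟧ ≅ N :=
        (shiftFunctorCompIsoId C (-1 : ℤ) (1 : ℤ) (by ring)).app N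
      have h1 : f ≫ e.inv = 0 := w.orth hM hN _
      calc f = (f ≫ e.inv) ≫ e.hom := by rw [Category.assoc, e.inv_hom_id, Category.comp_id]
        _ = 0 := by rw [h1, Limits.zero_comp]
    · intro hM
      obtain ⟨L, R, f, g, h, hL, hR, hT⟩ := w.wd M
      have hR' : (R⟦(1 : ℤ)⟧)⟦(-1 : ℤ)⟧ ∈ w.ge := by
        have eR : (R⟦(1 : ℤ)⟧)⟦(-1 : ℤ)⟧ ≅ R :=
          (shiftFunctorCompIsoId C (1 : ℤ) (-1 : ℤ) (by ring)).app R
        exact w.ge_retract hR ⟨eR.hom, eR.inv, eR.hom_inv_id⟩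
      have hg : g = 0 := hM hR' g
      obtain ⟨r, hr⟩ := Triangle.coyoneda_exact₂ _ hT (𝟙 M)
        ((Category.id_comp _).trans hg)
      exact w.le_retract hL ⟨r, f, hr.symm⟩
end

section
/- Let w, v be weight structures on the same triangulated category C such that C_{w≤0} ⊆ C_{v≤0} and C_{w≥0} ⊆ C_{v≥0}. Then w = v, i.e., both inclusions are equalities. -/
open CategoryTheory CategoryTheory.Limits CategoryTheory.Pretriangulated ZeroObject

universe v u

variable (C : Type u) [Category.{v} C] [HasZeroObject C] [Preadditive C] [HasShift C ℤ]
  [∀ n : ℤ, (shiftFunctor C n).Additive] [Pretriangulated C]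

namespace WeightStructureUniqueAux

variable {C}

/-- Maps from a `[-1]`-shifted `le` object to a `ge` object vanish. -/
lemma orth_shift (u : WeightStructure C) {A B : C} (hA : A ∈ u.le) (hB : B ∈ u.ge)
    (f : A⟦(-1 : ℤ)⟧ ⟶ B) : f = 0 := by
  apply (shiftFunctor C (1 : ℤ)).map_injective
  rw [Functor.map_zero]
  have e := (shiftFunctorCompIsoId C (-1 : ℤ) (1 : ℤ) (by ring)).app A
  have hχ : e.inv ≫ (shiftFunctor C (1 : ℤ)).map f = 0 := u.orth hA hB _
  calc (shiftFunctor C (1 : ℤ)).map f = e.hom ≫ (e.inv ≫ (shiftFunctor C (1 : ℤ)).map f) := by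
        rw [Iso.hom_inv_id_assoc]
    _ = 0 := by rw [hχ, comp_zero]

set_option linter.unusedSectionVars false in
/-- Membership in `le`/`ge` is closed under isomorphism (as a retract). -/
lemma mem_of_iso {S : Set C} (hS : ∀ ⦃X Y : C⦄, Y ∈ S →
    (∃ (s : X ⟶ Y) (r : Y ⟶ X), s ≫ r = 𝟙 X) → X ∈ S)
    {X Y : C} (e : X ≅ Y) (hY : Y ∈ S) : X ∈ S :=
  hS hY ⟨e.hom, e.inv, e.hom_inv_id⟩

/-- If a distinguished triangle has `mor₂ = 0` and its first object in `le`,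
then its middle object is in `le`. -/
lemma mem_le_of_triangle (u : WeightStructure C) (T : Triangle C) (hT : T ∈ distTriang C)
    (h2 : T.mor₂ = 0) (h1 : T.obj₁ ∈ u.le) : T.obj₂ ∈ u.le := by
  obtain ⟨s, hs⟩ := Triangle.coyoneda_exact₂ T hT (𝟙 T.obj₂) (by rw [h2, comp_zero])
  exact u.le_retract h1 ⟨s, T.mor₁, hs.symm⟩

/-- If a distinguished triangle has `mor₁ = 0` and its third object in `ge`,
then its middle object is in `ge`. -/
lemma mem_ge_of_triangle (u : WeightStructure C) (T : Triangle C) (hT : T ∈ distTriang C)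
    (h1 : T.mor₁ = 0) (h3 : T.obj₃ ∈ u.ge) : T.obj₂ ∈ u.ge := by
  obtain ⟨r, hr⟩ := Triangle.yoneda_exact₂ T hT (𝟙 T.obj₂) (by rw [h1, zero_comp])
  exact u.ge_retract h3 ⟨T.mor₂, r, hr.symm⟩

end WeightStructureUniqueAux

open WeightStructureUniqueAux in
/-- Two weight structures with `C_{w≤0} ⊆ C_{v≤0}` and `C_{w≥0} ⊆ C_{v≥0}` coincide. -/
theorem weightStructure_unique (w v : WeightStructure C)
    (hle : w.le ⊆ v.le) (hge : w.ge ⊆ v.ge) : w.le = v.le ∧ w.ge = v.ge := by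
  constructor
  · refine Set.Subset.antisymm hle ?_
    intro X hX
    obtain ⟨L, R, f, g, h, hL, hR, hT⟩ := w.wd X
    exact mem_le_of_triangle w _ hT (v.orth hX (hge hR) g) hL
  · refine Set.Subset.antisymm hge ?_
    intro X hX
    obtain ⟨L, R, f, g, h, hL, hR, hT⟩ := w.wd (X⟦(1 : ℤ)⟧)
    have hT' := Triangle.shift_distinguished _ hT (-1 : ℤ)
    set T' := (CategoryTheory.shiftFunctor (Triangle C) (-1 : ℤ)).obj (Triangle.mk f g h)
      with hT'def
    have ι : (X⟦(1 : ℤ)⟧)⟦(-1 : ℤ)⟧ ≅ X :=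
      (shiftFunctorCompIsoId C (1 : ℤ) (-1 : ℤ) (by ring)).app X
    have hfz : (shiftFunctor C (-1 : ℤ)).map f = 0 := by
      have hz : (shiftFunctor C (-1 : ℤ)).map f ≫ ι.hom = 0 :=
        orth_shift v (hle hL) hX _
      calc (shiftFunctor C (-1 : ℤ)).map f
          = ((shiftFunctor C (-1 : ℤ)).map f ≫ ι.hom) ≫ ι.inv := by
            rw [Category.assoc, Iso.hom_inv_id, Category.comp_id]
        _ = 0 := by rw [hz, zero_comp]
    have hmor₁ : T'.mor₁ = 0 := by
      rw [hT'def]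
      simp only [Triangle.shiftFunctor_eq]
      dsimp [Triangle.shiftFunctor]
      show ((-1 : ℤ).negOnePow • (shiftFunctor C (-1 : ℤ)).map f) = 0
      rw [hfz, smul_zero]
    have hobj₃ : T'.obj₃ ∈ w.ge := by
      rw [hT'def]
      simp only [Triangle.shiftFunctor_eq]
      exact mem_of_iso w.ge_retract
        ((shiftFunctorCompIsoId C (1 : ℤ) (-1 : ℤ) (by ring)).app R) hR
    have hobj₂ : T'.obj₂ ∈ w.ge := mem_ge_of_triangle w T' hT' hmor₁ hobj₃
    rw [hT'def] at hobj₂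
    simp only [Triangle.shiftFunctor_eq] at hobj₂
    exact mem_of_iso w.ge_retract ι.symm hobj₂
end

section
/- Let w be a weight structure on C, and let m < n be integers. Given an m-weight decomposition of M and an n-weight decomposition of M', any morphism g : M → M' extends to a morphism of the corresponding distinguished triangles, and this extension is unique. -/
open CategoryTheory CategoryTheory.Limits CategoryTheory.Pretriangulated ZeroObject

universe v u

variable (C : Type u) [Category.{v} C] [HasZeroObject C] [Preadditive C] [HasShift C ℤ]
  [∀ n : ℤ, (shiftFunctor C n).Additive] [Pretriangulated C]

variable {C}

lemma WS.ge_iso (w : WeightStructure C) {X Y : C} (e : X ≅ Y) (h : Y ∈ w.ge) : X ∈ w.ge :=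
  w.ge_retract h ⟨e.hom, e.inv, e.hom_inv_id⟩

lemma WS.ge_shift_nat (w : WeightStructure C) {Y : C} (h : Y ∈ w.ge) (j : ℕ) :
    Y⟦(j : ℤ)⟧ ∈ w.ge := by
  induction j with
  | zero => exact WS.ge_iso w ((shiftFunctorZero C ℤ).app Y) h
  | succ k hk =>
      refine WS.ge_iso w (((shiftFunctorAdd' C (k : ℤ) 1 ((k : ℤ) + 1) rfl).app Y)) (w.ge_shift hk)

lemma WS.zero_of_ge (w : WeightStructure C) {X Y : C} (hX : X ∈ w.le) (hY : Y ∈ w.ge)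
    (k : ℤ) (hk : 1 ≤ k) (f : X ⟶ Y⟦k⟧) : f = 0 := by
  have e : Y⟦k⟧ ≅ (Y⟦((k - 1).toNat : ℤ)⟧)⟦(1 : ℤ)⟧ :=
    (shiftFunctorAdd' C ((k - 1).toNat : ℤ) 1 k (by omega)).app Y
  have := w.orth hX (WS.ge_shift_nat w hY (k - 1).toNat) (f ≫ e.hom)
  have : f ≫ e.hom ≫ e.inv = 0 := by rw [← Category.assoc, this, zero_comp]
  simpa using this

lemma WS.hom_eq_zero (w : WeightStructure C) {X Y : C} (p q : ℤ) (hpq : p < q)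
    (hX : X⟦-p⟧ ∈ w.le) (hY : Y⟦-q⟧ ∈ w.ge) (f : X ⟶ Y) : f = 0 := by
  apply (shiftFunctor C (-p)).map_injective
  rw [Functor.map_zero]
  have e : Y⟦-p⟧ ≅ (Y⟦-q⟧)⟦q - p⟧ := (shiftFunctorAdd' C (-q) (q - p) (-p) (by ring)).app Y
  have h0 : (shiftFunctor C (-p)).map f ≫ e.hom = 0 :=
    WS.zero_of_ge w hX hY (q - p) (by omega) _
  have : (shiftFunctor C (-p)).map f ≫ e.hom ≫ e.inv = 0 := by
    rw [← Category.assoc, h0, zero_comp]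
  simpa using this


variable (C)

/-- Given an `m`-weight decomposition of `M`, an `n`-weight decomposition of `M'` with
`m < n`, any `g : M ⟶ M'` extends uniquely to a morphism of the corresponding
distinguished triangles. -/
theorem unique_morphism_of_weight_decompositions (w : WeightStructure C)
    (m n : ℤ) (hmn : m < n) (M M' A B A' B' : C)
    (a : A ⟶ M) (b : M ⟶ B) (c : B ⟶ A⟦(1 : ℤ)⟧)
    (hT : Triangle.mk a b c ∈ distTriang C)
    (hA : A⟦(-m : ℤ)⟧ ∈ w.le) (hB : B⟦(-(m + 1) : ℤ)⟧ ∈ w.ge)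
    (a' : A' ⟶ M') (b' : M' ⟶ B') (c' : B' ⟶ A'⟦(1 : ℤ)⟧)
    (hT' : Triangle.mk a' b' c' ∈ distTriang C)
    (hA' : A'⟦(-n : ℤ)⟧ ∈ w.le) (hB' : B'⟦(-(n + 1) : ℤ)⟧ ∈ w.ge)
    (g : M ⟶ M') :
    ∃! p : (A ⟶ A') × (B ⟶ B'),
      p.1 ≫ a' = a ≫ g ∧ b ≫ p.2 = g ≫ b' ∧
        p.2 ≫ c' = c ≫ (shiftFunctor C (1 : ℤ)).map p.1 := by
  -- existence
  have hzero : (a ≫ g) ≫ b' = 0 :=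
    WS.hom_eq_zero w m (n + 1) (by omega) hA hB' _
  obtain ⟨h, hh⟩ : ∃ h : A ⟶ A', a ≫ g = h ≫ a' :=
    Triangle.coyoneda_exact₂ _ hT' (a ≫ g) hzero
  obtain ⟨j, hj₁, hj₂⟩ : ∃ j : B ⟶ B',
      b ≫ j = g ≫ b' ∧ c ≫ (shiftFunctor C (1 : ℤ)).map h = j ≫ c' :=
    complete_distinguished_triangle_morphism _ _ hT hT' h g hh
  refine ⟨⟨h, j⟩, ⟨hh.symm, hj₁, hj₂.symm⟩, ?_⟩
  rintro ⟨h', j'⟩ ⟨e₁, e₂, e₃⟩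
  -- uniqueness of the first component
  have hd : (h' - h) ≫ a' = 0 := by
    rw [Preadditive.sub_comp, e₁, hh.symm, sub_self]
  obtain ⟨t, ht⟩ : ∃ t : A ⟶ B'⟦(-1 : ℤ)⟧,
      h' - h = t ≫ ((Triangle.mk a' b' c').invRotate.mor₁) :=
    Triangle.coyoneda_exact₂ _ (inv_rot_of_distTriang _ hT') (h' - h) hd
  have ht0 : t = 0 := by
    refine WS.hom_eq_zero w m n hmn hA ?_ t
    exact WS.ge_iso w ((shiftFunctorAdd' C (-1 : ℤ) (-n) (-(n+1)) (by ring)).app B').symm hB'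
  have hfst : h' = h := by
    have := ht
    rw [ht0] at this
    replace this := this.trans zero_comp
    exact sub_eq_zero.1 this
  -- uniqueness of the second component
  have hd2 : b ≫ (j' - j) = 0 := by
    rw [Preadditive.comp_sub, e₂, hj₁, sub_self]
  obtain ⟨t₂, ht₂⟩ : ∃ t₂ : A⟦(1 : ℤ)⟧ ⟶ B', j' - j = c ≫ t₂ :=
    Triangle.yoneda_exact₃ _ hT (j' - j) hd2
  have ht₂0 : t₂ = 0 := by
    refine WS.hom_eq_zero w (m + 1) (n + 1) (by omega) ?_ hB' t₂
    have e := (shiftFunctorAdd' C (1 : ℤ) (-(m+1)) (-m) (by ring)).app A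
    exact w.le_retract hA ⟨e.inv, e.hom, e.inv_hom_id⟩
  have hsnd : j' = j := by
    rw [ht₂0, comp_zero] at ht₂
    exact sub_eq_zero.1 ht₂
  rw [hfst, hsnd]
end

section
/- Let F : C → C' be an exact functor between triangulated categories with weight structures w and w', and assume F is essentially surjective on objects. Then F is weight-exact if and only if C'_{w'≤0} is the Karoubi-closure of F(C_{w≤0}) in C' and C'_{w'≥0} is the Karoubi-closure of F(C_{w≥0}) in C'. -/
open CategoryTheory CategoryTheory.Limits CategoryTheory.Pretriangulated ZeroObject

universe v u

variable (C : Type u) [Category.{v} C] [HasZeroObject C] [Preadditive C] [HasShift C ℤ]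
  [∀ n : ℤ, (shiftFunctor C n).Additive] [Pretriangulated C]

variable {C' : Type u} [Category.{v} C'] [HasZeroObject C'] [Preadditive C'] [HasShift C' ℤ]
  [∀ n : ℤ, (shiftFunctor C' n).Additive] [Pretriangulated C']

/-- The Karoubi-closure of a class of objects: all retracts of its elements. -/
def KarClosure (S : Set C) : Set C :=
  {X | ∃ Z ∈ S, ∃ (s : X ⟶ Z) (r : Z ⟶ X), s ≫ r = 𝟙 X}

/-- An exact functor `F : C ⥤ C'`, essentially surjective on objects, is weight-exact with
respect to `(w, w')` iff `w' = (Kar-closure of F(C_{w≤0}), Kar-closure of F(C_{w≥0}))`. -/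
theorem weightExact_iff_karClosure (F : C ⥤ C') [F.CommShift ℤ] [F.IsTriangulated] [F.EssSurj]
    (w : WeightStructure C) (w' : WeightStructure C') :
    ((∀ X ∈ w.le, F.obj X ∈ w'.le) ∧ (∀ X ∈ w.ge, F.obj X ∈ w'.ge)) ↔
      (w'.le = KarClosure C' (F.obj '' w.le) ∧ w'.ge = KarClosure C' (F.obj '' w.ge)) := by
  constructor
  · rintro ⟨hle, hge⟩
    constructor
    · apply Set.Subset.antisymm
      · intro Y hY
        set M := F.objPreimage Y with hM
        have e : F.obj M ≅ Y := F.objObjPreimageIso Y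
        obtain ⟨L, R, f, g, h, hL, hR, hT⟩ := w.wd M
        have hT' := F.map_distinguished _ hT
        have hg0 : F.map g = 0 := by
          have horth := w'.orth hY (hge R hR)
            (e.inv ≫ F.map g ≫ (F.commShiftIso (1 : ℤ)).hom.app R)
          rw [← cancel_epi e.inv, ← cancel_mono ((F.commShiftIso (1 : ℤ)).hom.app R)]
          simpa using horth
        obtain ⟨s, hs⟩ : ∃ s : F.obj M ⟶ F.obj L, 𝟙 (F.obj M) = s ≫ F.map f :=
          Triangle.coyoneda_exact₂ _ hT' (𝟙 (F.obj M))
          (by show 𝟙 (F.obj M) ≫ F.map g = 0; rw [hg0, comp_zero])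
        refine ⟨F.obj L, ⟨L, hL, rfl⟩, e.inv ≫ s, F.map f ≫ e.hom, ?_⟩
        rw [Category.assoc, ← Category.assoc s, ← hs]
        simp
      · rintro Y ⟨Z, ⟨X, hX, rfl⟩, s, r, hsr⟩
        exact w'.le_retract (hle X hX) ⟨s, r, hsr⟩
    · apply Set.Subset.antisymm
      · intro Y hY
        set M := F.objPreimage Y with hM
        have e : F.obj M ≅ Y := F.objObjPreimageIso Y
        obtain ⟨L, R, f, g, h, hL, hR, hT⟩ := w.wd (M⟦(1 : ℤ)⟧)
        have hT' := F.map_distinguished _ hT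
        have hf0 : F.map f = 0 := by
          have horth := w'.orth (hle L hL) hY
            (F.map f ≫ (F.commShiftIso (1 : ℤ)).hom.app M ≫ (shiftFunctor C' (1 : ℤ)).map e.hom)
          rw [← cancel_mono ((F.commShiftIso (1 : ℤ)).hom.app M),
            ← cancel_mono ((shiftFunctor C' (1 : ℤ)).map e.hom)]
          simpa using horth
        obtain ⟨t, ht⟩ : ∃ t : F.obj (R⟦(1 : ℤ)⟧) ⟶ F.obj (M⟦(1 : ℤ)⟧),
            𝟙 (F.obj (M⟦(1 : ℤ)⟧)) = F.map g ≫ t :=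
          Triangle.yoneda_exact₂ _ hT' (𝟙 (F.obj (M⟦(1 : ℤ)⟧)))
          (by show F.map f ≫ 𝟙 (F.obj (M⟦(1 : ℤ)⟧)) = 0; rw [hf0, zero_comp])
        -- so F.obj (M⟦1⟧) is a retract of F.obj (R⟦1⟧) via F.map g and t
        -- transfer this to Y, using Y ≅ (F.obj (M⟦1⟧))⟦-1⟧ up to isos
        have e2 : Y⟦(1 : ℤ)⟧ ≅ F.obj (M⟦(1 : ℤ)⟧) :=
          (shiftFunctor C' (1 : ℤ)).mapIso e.symm ≪≫ ((F.commShiftIso (1 : ℤ)).app M).symm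
        have key : (e2.hom ≫ F.map g) ≫ (t ≫ e2.inv) = 𝟙 (Y⟦(1 : ℤ)⟧) := by
          rw [Category.assoc, ← Category.assoc (F.map g), ← ht]
          simp
        have uY : Y ≅ (Y⟦(1 : ℤ)⟧)⟦(-1 : ℤ)⟧ :=
          ((shiftFunctorCompIsoId C' (1 : ℤ) (-1 : ℤ) (by ring)).app Y).symm
        have v : (F.obj (R⟦(1 : ℤ)⟧))⟦(-1 : ℤ)⟧ ≅ F.obj R :=
          (shiftFunctor C' (-1 : ℤ)).mapIso ((F.commShiftIso (1 : ℤ)).app R) ≪≫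
            (shiftFunctorCompIsoId C' (1 : ℤ) (-1 : ℤ) (by ring)).app (F.obj R)
        refine ⟨F.obj R, ⟨R, hR, rfl⟩,
          uY.hom ≫ (shiftFunctor C' (-1 : ℤ)).map (e2.hom ≫ F.map g) ≫ v.hom,
          v.inv ≫ (shiftFunctor C' (-1 : ℤ)).map (t ≫ e2.inv) ≫ uY.inv, ?_⟩
        rw [Category.assoc, Category.assoc, ← Category.assoc v.hom, Iso.hom_inv_id,
          Category.id_comp, ← Functor.map_comp_assoc, key, CategoryTheory.Functor.map_id,
          Category.id_comp, Iso.hom_inv_id]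
      · rintro Y ⟨Z, ⟨X, hX, rfl⟩, s, r, hsr⟩
        exact w'.ge_retract (hge X hX) ⟨s, r, hsr⟩
  · rintro ⟨h1, h2⟩
    constructor
    · intro X hX
      rw [h1]
      exact ⟨F.obj X, ⟨X, hX, rfl⟩, 𝟙 _, 𝟙 _, by simp⟩
    · intro X hX
      rw [h2]
      exact ⟨F.obj X, ⟨X, hX, rfl⟩, 𝟙 _, 𝟙 _, by simp⟩
end

section
/- Let C' ⊆ C be a full triangulated subcategory, and suppose C carries a weight structure w and C' carries a weight structure w'. Then the inclusion C' → C is weight-exact if and only if w restricts to C' and w' = (C_{w≤0} ∩ Ob C', C_{w≥0} ∩ Ob C'). -/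
open CategoryTheory CategoryTheory.Limits CategoryTheory.Pretriangulated ZeroObject

universe v u

variable (C : Type u) [Category.{v} C] [HasZeroObject C] [Preadditive C] [HasShift C ℤ]
  [∀ n : ℤ, (shiftFunctor C n).Additive] [Pretriangulated C]

variable {C' : Type u} [Category.{v} C'] [HasZeroObject C'] [Preadditive C'] [HasShift C' ℤ]
  [∀ n : ℤ, (shiftFunctor C' n).Additive] [Pretriangulated C']

/-- For a full triangulated subcategory `ι : C' ⥤ C` carrying a weight structure `w'`, the
inclusion is weight-exact iff `w'` is the restriction of `w`, i.e.
`w' = (C_{w≤0} ∩ Ob C', C_{w≥0} ∩ Ob C')` (in which case `w` restricts to `C'`). -/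
theorem inclusion_weightExact_iff_restriction
    (ι : C' ⥤ C) [ι.CommShift ℤ] [ι.IsTriangulated] [ι.Full] [ι.Faithful]
    (w : WeightStructure C) (w' : WeightStructure C') :
    ((∀ X ∈ w'.le, ι.obj X ∈ w.le) ∧ (∀ X ∈ w'.ge, ι.obj X ∈ w.ge)) ↔
      (w'.le = {X : C' | ι.obj X ∈ w.le} ∧ w'.ge = {X : C' | ι.obj X ∈ w.ge}) := by
  constructor
  · rintro ⟨hle, hge⟩
    constructor
    · apply Set.eq_of_subset_of_subset
      · intro X hX
        exact hle X hX
      · intro X hX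
        obtain ⟨L, R, f, g, h, hL, hR, hT⟩ := w'.wd X
        have hg : g = 0 := by
          apply ι.map_injective
          have : ι.map g ≫ (ι.commShiftIso (1 : ℤ)).hom.app R = 0 :=
            w.orth hX (hge R hR) _
          rw [← cancel_mono ((ι.commShiftIso (1 : ℤ)).hom.app R)]
          simpa using this
        obtain ⟨s, hs⟩ := Triangle.coyoneda_exact₂ _ hT (𝟙 X) (by simp [hg]; exact Limits.comp_zero)
        exact w'.le_retract hL ⟨s, f, hs.symm⟩
    · apply Set.eq_of_subset_of_subset
      · intro X hX
        exact hge X hX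
      · intro X hX
        obtain ⟨L, R, f, g, h, hL, hR, hT⟩ := w'.wd (X⟦(1 : ℤ)⟧)
        have hf : f = 0 := by
          apply ι.map_injective
          have : ι.map f ≫ (ι.commShiftIso (1 : ℤ)).hom.app X = 0 :=
            w.orth (hle L hL) hX _
          rw [← cancel_mono ((ι.commShiftIso (1 : ℤ)).hom.app X)]
          simpa using this
        obtain ⟨r, hr⟩ := Triangle.yoneda_exact₂ _ hT (𝟙 (X⟦(1 : ℤ)⟧)) (by simp [hf]; exact Limits.zero_comp)
        obtain ⟨g₀, hg₀⟩ := (shiftFunctor C' (1 : ℤ)).map_surjective g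
        obtain ⟨r₀, hr₀⟩ := (shiftFunctor C' (1 : ℤ)).map_surjective r
        have : g₀ ≫ r₀ = 𝟙 X := by
          apply (shiftFunctor C' (1 : ℤ)).map_injective
          rw [Functor.map_comp, hg₀, hr₀]
          exact hr.symm.trans ((shiftFunctor C' (1 : ℤ)).map_id X).symm
        exact w'.ge_retract hR ⟨g₀, r₀, this⟩
  · rintro ⟨h₁, h₂⟩
    constructor
    · intro X hX
      rw [h₁] at hX
      exact hX
    · intro X hX
      rw [h₂] at hX
      exact hX
end

section
/- Let w be a weight structure on a triangulated category C and let C' ⊆ C be a full triangulated subcategory whose class of objects contains C_{w≤n} for all n ∈ ℤ (i.e., all w-bounded above objects). Then w restricts to a weight structure on C'. -/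
open CategoryTheory CategoryTheory.Limits CategoryTheory.Pretriangulated ZeroObject

universe v u

variable (C : Type u) [Category.{v} C] [HasZeroObject C] [Preadditive C] [HasShift C ℤ]
  [∀ n : ℤ, (shiftFunctor C n).Additive] [Pretriangulated C]

variable {C' : Type u} [Category.{v} C'] [HasZeroObject C'] [Preadditive C'] [HasShift C' ℤ]
  [∀ n : ℤ, (shiftFunctor C' n).Additive] [Pretriangulated C']

/-- If a full triangulated subcategory `ι : C' ⥤ C` contains all `w`-bounded above objects
(i.e. all of `C_{w≤n}` for every `n ∈ ℤ`), then `w` restricts to a weight structure on `C'`,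
namely `(C_{w≤0} ∩ Ob C', C_{w≥0} ∩ Ob C')`. -/
theorem weightStructure_restricts
    (ι : C' ⥤ C) [ι.CommShift ℤ] [ι.IsTriangulated] [ι.Full] [ι.Faithful]
    (w : WeightStructure C)
    (hsub : ∀ (X : C) (n : ℤ), X⟦(-n : ℤ)⟧ ∈ w.le → ∃ Y : C', Nonempty (ι.obj Y ≅ X)) :
    ∃ w' : WeightStructure C',
      w'.le = {X : C' | ι.obj X ∈ w.le} ∧ w'.ge = {X : C' | ι.obj X ∈ w.ge} := by
  have le_iso : ∀ {X Y : C}, (X ≅ Y) → Y ∈ w.le → X ∈ w.le := fun e h =>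
    w.le_retract h ⟨e.hom, e.inv, e.hom_inv_id⟩
  have ge_iso : ∀ {X Y : C}, (X ≅ Y) → Y ∈ w.ge → X ∈ w.ge := fun e h =>
    w.ge_retract h ⟨e.hom, e.inv, e.hom_inv_id⟩
  refine ⟨{
    le := {X : C' | ι.obj X ∈ w.le}
    ge := {X : C' | ι.obj X ∈ w.ge}
    le_retract := ?_
    ge_retract := ?_
    le_shift := ?_
    ge_shift := ?_
    orth := ?_
    wd := ?_ }, rfl, rfl⟩
  · rintro X Y hY ⟨s, r, hsr⟩
    exact w.le_retract hY ⟨ι.map s, ι.map r, by rw [← ι.map_comp, hsr, ι.map_id]⟩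
  · rintro X Y hY ⟨s, r, hsr⟩
    exact w.ge_retract hY ⟨ι.map s, ι.map r, by rw [← ι.map_comp, hsr, ι.map_id]⟩
  · intro X hX
    exact le_iso ((ι.commShiftIso (-1 : ℤ)).app X) (w.le_shift hX)
  · intro X hX
    exact ge_iso ((ι.commShiftIso (1 : ℤ)).app X) (w.ge_shift hX)
  · intro X Y hX hY f
    have h0 : ι.map f ≫ ((ι.commShiftIso (1 : ℤ)).app Y).hom = 0 :=
      w.orth hX hY _
    have : ι.map f = 0 := by
      have h1 := h0 =≫ ((ι.commShiftIso (1 : ℤ)).app Y).inv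
      simpa using h1
    apply ι.map_injective
    rw [this, ι.map_zero]
  · intro M
    obtain ⟨L, R, f, g, h, hL, hR, hdist⟩ := w.wd (ι.obj M)
    have hL0 : L⟦(-(0 : ℤ) : ℤ)⟧ ∈ w.le := by
      rw [neg_zero]
      exact le_iso ((shiftFunctorZero C ℤ).app L) hL
    obtain ⟨L', ⟨eL⟩⟩ := hsub L 0 hL0
    set f' : L' ⟶ M := ι.preimage (eL.hom ≫ f) with hf'
    have hf'map : ι.map f' = eL.hom ≫ f := ι.map_preimage _
    obtain ⟨Z, g', h', hT⟩ := Pretriangulated.distinguished_cocone_triangle f'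
    have hTmap := ι.map_distinguished _ hT
    -- compare with the weight decomposition triangle
    have eTri := isoTriangleOfIso₁₂ (ι.mapTriangle.obj (Triangle.mk f' g' h'))
      (Triangle.mk f g h) hTmap hdist eL (Iso.refl _)
      (by exact (Category.comp_id (ι.map f')).trans hf'map)
    have eZ : ι.obj Z ≅ R⟦(1 : ℤ)⟧ := Triangle.π₃.mapIso eTri
    have hRmem : ι.obj (Z⟦(-1 : ℤ)⟧) ∈ w.ge := by
      refine ge_iso (((ι.commShiftIso (-1 : ℤ)).app Z) ≪≫
        (shiftFunctor C (-1 : ℤ)).mapIso eZ ≪≫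
        (shiftFunctorCompIsoId C (1 : ℤ) (-1 : ℤ) (by omega)).app R) hR
    set e : (Z⟦(-1 : ℤ)⟧)⟦(1 : ℤ)⟧ ≅ Z :=
      (shiftFunctorCompIsoId C' (-1 : ℤ) (1 : ℤ) (by omega)).app Z with he
    refine ⟨L', Z⟦(-1 : ℤ)⟧, f', g' ≫ e.inv, e.hom ≫ h', le_iso eL hL, hRmem, ?_⟩
    refine isomorphic_distinguished _ hT _ ?_
    exact Triangle.isoMk _ _ (Iso.refl _) (Iso.refl _) e (by exact (Category.comp_id f').trans (Category.id_comp f').symm)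
      (by exact (by simp : (g' ≫ e.inv) ≫ e.hom = g').trans (Category.id_comp g').symm)
      (by exact (by simp : (e.hom ≫ h') ≫ (shiftFunctor C' (1 : ℤ)).map (𝟙 L') = e.hom ≫ h'))
end

section
/- Let w be a weight structure on C that is α-generated by a class P (i.e., C_{w≥0} = [∪_{i≥0}P[i]]^α and C_{w≤0} = [∪_{i≤0}P[i]]^α). Then w is left non-degenerate (any object lying in C_{w≥n} for all n is zero) and w is generated by P, i.e., C_{w≥0} = {N : Hom(P[i], N) = 0 for all P ∈ P, i < 0}. -/
open CategoryTheory CategoryTheory.Limits CategoryTheory.Pretriangulated ZeroObject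

universe v u

variable (C : Type u) [Category.{v} C] [HasZeroObject C] [Preadditive C] [HasShift C ℤ]
  [∀ n : ℤ, (shiftFunctor C n).Additive] [Pretriangulated C]

/-- A class of objects closed under coproducts of fewer than `α` of its elements. -/
def AlphaSmashClosed (α : Cardinal.{v}) (S : Set C) : Prop :=
  ∀ (I : Type v), Cardinal.mk I < α → ∀ (f : I → C) [HasCoproduct f],
    (∀ i, f i ∈ S) → (∐ f) ∈ S

/-- `[B]^α`: the smallest strict extension-closed class of objects containing `B` and closed
under coproducts of fewer than `α` objects. -/
def AlphaClosure (α : Cardinal.{v}) (B : Set C) : Set C :=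
  ⋂₀ {S : Set C | B ⊆ S ∧ (0 : C) ∈ S ∧ (∀ ⦃X Y : C⦄, X ∈ S → Nonempty (X ≅ Y) → Y ∈ S) ∧
    (∀ T : Triangle C, (T ∈ distTriang C) → T.obj₁ ∈ S → T.obj₃ ∈ S → T.obj₂ ∈ S) ∧
    AlphaSmashClosed C α S}

/-- The class of all shifts `X⟦i⟧` of elements `X ∈ P` with `i` satisfying the predicate `p`. -/
def Shifts (P : Set C) (p : ℤ → Prop) : Set C :=
  {Z | ∃ X ∈ P, ∃ i : ℤ, p i ∧ Nonempty (Z ≅ X⟦i⟧)}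

/-- Minimality of the closure. -/
lemma alphaClosure_subset {α : Cardinal.{v}} {B S : Set C}
    (h1 : B ⊆ S) (h2 : (0 : C) ∈ S) (h3 : ∀ ⦃X Y : C⦄, X ∈ S → Nonempty (X ≅ Y) → Y ∈ S)
    (h4 : ∀ T : Triangle C, (T ∈ distTriang C) → T.obj₁ ∈ S → T.obj₃ ∈ S → T.obj₂ ∈ S)
    (h5 : AlphaSmashClosed C α S) : AlphaClosure C α B ⊆ S :=
  fun _ hZ => hZ S ⟨h1, h2, h3, h4, h5⟩

lemma mem_alphaClosure {α : Cardinal.{v}} {B : Set C} {Z : C} (hZ : Z ∈ B) :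
    Z ∈ AlphaClosure C α B :=
  fun _ hS => hS.1 hZ

lemma alphaClosure_iso {α : Cardinal.{v}} {B : Set C} {Z Y : C} (hZ : Z ∈ AlphaClosure C α B)
    (e : Z ≅ Y) : Y ∈ AlphaClosure C α B :=
  fun S hS => hS.2.2.1 (hZ S hS) ⟨e⟩

/-- Maps from `X⟦i⟧` to an object all of whose shifts are in `w.ge` vanish, when `X ∈ w.le`. -/
lemma hom_zero_of_le_of_all_ge (w : WeightStructure C) {X M : C} (hX : X ∈ w.le)
    (hM : ∀ m : ℤ, M⟦m⟧ ∈ w.ge) (i : ℤ) (f : X⟦i⟧ ⟶ M) : f = 0 := by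
  let e := shiftFunctorCompIsoId C i (-i) (add_neg_cancel i)
  let fh : X ⟶ M⟦(-i : ℤ)⟧ := e.inv.app X ≫ (shiftFunctor C (-i)).map f
  let d := (shiftFunctorAdd' C (-i - 1) 1 (-i) (by ring)).app M
  have h0 : fh ≫ d.hom = 0 := w.orth hX (hM (-i - 1)) _
  have hfh : fh = 0 := by
    have : fh = (fh ≫ d.hom) ≫ d.inv := by simp
    rw [this, h0, zero_comp]
  have hmap : (shiftFunctor C (-i)).map f = 0 := by
    have : (shiftFunctor C (-i)).map f = e.hom.app X ≫ fh := by simp [fh]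
    rw [this, hfh, comp_zero]
  exact (shiftFunctor C (-i)).map_injective (by rw [hmap, Functor.map_zero])

/-- Theorem `tvneg`(2): if a weight structure `w` is `α`-generated by a class `P`
(i.e. `C_{w≥0} = [∪_{i≥0} P[i]]^α` and `C_{w≤0} = [∪_{i≤0} P[i]]^α`), then `w` is left
non-degenerate and `w` is generated by `P`:
`C_{w≥0} = {N : Hom(P[i], N) = 0 for all P ∈ P, i < 0}`. -/
theorem left_nondegenerate_and_generated
    (α : Cardinal.{v}) (hα : α.IsRegular)
    (hC : ∀ I : Type v, Cardinal.mk I < α → HasCoproductsOfShape I C)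
    (w : WeightStructure C) (P : Set C)
    (hge : w.ge = AlphaClosure C α (Shifts C P (fun i => 0 ≤ i)))
    (hle : w.le = AlphaClosure C α (Shifts C P (fun i => i ≤ 0))) :
    (∀ M : C, (∀ n : ℤ, M⟦(-n : ℤ)⟧ ∈ w.ge) → IsZero M) ∧
    w.ge = {N : C | ∀ X ∈ P, ∀ i : ℤ, i < 0 → ∀ f : X⟦i⟧ ⟶ N, f = 0} := by
  -- every element of `P` is in `w.le`
  have hPle : ∀ X ∈ P, X ∈ w.le := by
    intro X hX
    rw [hle]
    exact mem_alphaClosure C ⟨X, hX, 0, le_refl 0, ⟨((shiftFunctorZero C ℤ).app X).symm⟩⟩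
  have hPle' : ∀ X ∈ P, ∀ i : ℤ, i ≤ 0 → X⟦i⟧ ∈ w.le := by
    intro X hX i hi
    rw [hle]
    exact mem_alphaClosure C ⟨X, hX, i, hi, ⟨Iso.refl _⟩⟩
  constructor
  · -- left non-degeneracy
    intro M hM'
    have hM : ∀ m : ℤ, M⟦m⟧ ∈ w.ge := by
      intro m
      have := hM' (-m)
      rwa [neg_neg] at this
    -- the left orthogonal of `M`
    set S : Set C := {Z : C | ∀ g : Z ⟶ M, g = 0} with hS
    have hgeS : w.ge ⊆ S := by
      rw [hge]
      apply alphaClosure_subset C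
      · rintro Z ⟨X, hX, i, _, ⟨e⟩⟩ g
        have h0 : e.inv ≫ g = 0 := hom_zero_of_le_of_all_ge C w (hPle X hX) hM i _
        have : g = e.hom ≫ e.inv ≫ g := by simp
        rw [this, h0, comp_zero]
      · intro g
        exact (isZero_zero C).eq_of_src g 0
      · rintro X Y hX ⟨e⟩ g
        have h0 : e.hom ≫ g = 0 := hX _
        have : g = e.inv ≫ e.hom ≫ g := by simp
        rw [this, h0, comp_zero]
      · intro T hT h1 h3 g
        obtain ⟨h, hh⟩ := Triangle.yoneda_exact₂ T hT g (h1 _)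
        rw [hh, h3 h, comp_zero]
      · intro I _ f _ hf g
        apply Limits.Sigma.hom_ext
        intro j
        rw [hf j (Sigma.ι f j ≫ g), comp_zero]
    have hMge : M ∈ w.ge := by
      rw [hge] at hM ⊢
      exact alphaClosure_iso C (hM 0) ((shiftFunctorZero C ℤ).app M)
    rw [IsZero.iff_id_eq_zero]
    exact hgeS hMge (𝟙 M)
  · ext N
    simp only [Set.mem_setOf_eq]
    constructor
    · -- `w.ge ⊆ RHS`
      intro hN X hX i hi f
      let d := (shiftFunctorAdd' C i 1 (i + 1) rfl).app X
      have h0 : d.hom ≫ (shiftFunctor C (1 : ℤ)).map f = 0 :=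
        w.orth (hPle' X hX (i + 1) (by omega)) hN _
      have hmap : (shiftFunctor C (1 : ℤ)).map f = 0 := by
        have : (shiftFunctor C (1 : ℤ)).map f = d.inv ≫ d.hom ≫ (shiftFunctor C (1 : ℤ)).map f := by
          simp
        rw [this, h0, comp_zero]
      exact (shiftFunctor C (1 : ℤ)).map_injective (by rw [hmap, Functor.map_zero])
    · -- RHS ⊆ `w.ge`
      intro hN
      set F := shiftFunctor C (-1 : ℤ) with hF
      -- the class of objects `Z` with `Hom(Z⟦-1⟧, N) = 0`
      set S : Set C := {Z : C | ∀ g : F.obj Z ⟶ N, g = 0} with hSdef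
      have hleS : w.le ⊆ S := by
        rw [hle]
        apply alphaClosure_subset C
        · rintro Z ⟨X, hX, i, hi, ⟨e⟩⟩ g
          have h1 : F.map e.inv ≫ g = 0 := by
            let d := (shiftFunctorAdd' C i (-1 : ℤ) (i - 1) (by ring)).app X
            have h2 : d.hom ≫ F.map e.inv ≫ g = 0 := hN X hX (i - 1) (by omega) _
            have : F.map e.inv ≫ g = d.inv ≫ d.hom ≫ F.map e.inv ≫ g := by simp
            rw [this, h2, comp_zero]
          have : g = F.map e.hom ≫ F.map e.inv ≫ g := by
            rw [← Category.assoc, ← F.map_comp, e.hom_inv_id, F.map_id, Category.id_comp]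
          rw [this, h1, comp_zero]
        · intro g
          exact (F.map_isZero (isZero_zero C)).eq_of_src g 0
        · rintro X Y hX ⟨e⟩ g
          have h1 : F.map e.hom ≫ g = 0 := hX _
          have : g = F.map e.inv ≫ F.map e.hom ≫ g := by
            rw [← Category.assoc, ← F.map_comp, e.inv_hom_id, F.map_id, Category.id_comp]
          rw [this, h1, comp_zero]
        · intro T hT h1 h3 g
          have hT' := Triangle.shift_distinguished T hT (-1)
          set T' := (CategoryTheory.shiftFunctor (Triangle C) (-1 : ℤ)).obj T with hT'def
          have hm : T'.mor₁ ≫ g = 0 := h1 _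
          obtain ⟨h, hh⟩ := Triangle.yoneda_exact₂ T' hT' g hm
          rw [hh, show h = 0 from h3 h]
          exact comp_zero
        · intro I _ f _ hf g
          let G := shiftFunctor C (1 : ℤ)
          let η := shiftFunctorCompIsoId C (-1 : ℤ) 1 (by ring)
          have hcomp : ∀ j, Sigma.ι f j ≫ η.inv.app (∐ f) ≫ G.map g = 0 := by
            intro j
            have hnat : Sigma.ι f j ≫ η.inv.app (∐ f) = η.inv.app (f j) ≫ G.map (F.map (Sigma.ι f j)) :=
              η.inv.naturality (Sigma.ι f j)
            rw [← Category.assoc, hnat, Category.assoc, ← G.map_comp, hf j (F.map (Sigma.ι f j) ≫ g),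
              G.map_zero, comp_zero]
          have hhat : η.inv.app (∐ f) ≫ G.map g = 0 := by
            apply Limits.Sigma.hom_ext
            intro j
            rw [← Category.assoc, Category.assoc, hcomp j, comp_zero]
          have hmap : G.map g = 0 := by
            have : G.map g = η.hom.app (∐ f) ≫ η.inv.app (∐ f) ≫ G.map g := by simp
            rw [this, hhat, comp_zero]
          exact G.map_injective (by rw [hmap, G.map_zero])
      -- weight decomposition of `N⟦1⟧`
      obtain ⟨L, R, f, g, h, hL, hR, hT⟩ := w.wd (N⟦(1 : ℤ)⟧)
      have hT' := Triangle.shift_distinguished _ hT (-1)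
      set T' := (CategoryTheory.shiftFunctor (Triangle C) (-1 : ℤ)).obj (Triangle.mk f g h) with hT'def
      let η := shiftFunctorCompIsoId C (1 : ℤ) (-1) (by ring)
      have hmor : T'.mor₁ ≫ η.hom.app N = 0 := hleS hL _
      obtain ⟨r, hr⟩ := Triangle.yoneda_exact₂ T' hT' (η.hom.app N) hmor
      have hY : ((R⟦(1 : ℤ)⟧)⟦(-1 : ℤ)⟧ : C) ∈ w.ge := by
        rw [hge] at hR ⊢
        exact alphaClosure_iso C hR (η.app R).symm
      apply w.ge_retract hY
      refine ⟨η.inv.app N ≫ T'.mor₂, r, ?_⟩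
      exact (Category.assoc _ _ _).trans ((congrArg (η.inv.app N ≫ ·) hr).symm.trans (η.inv_hom_id_app N))
end
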